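/- The deformation of the restricted generator is a bounded perturbation: assume ν > 0, so that λ_j > 0 for all j. Then for every x ∈ ℓ²(ℕ, ℝ), ∑_{j≥0} ( N_ex·sin²(φ√(j+1)) · (μ_{j+1}/λ_j) · x_{j+1} )² ≤ ( N_ex² (ν+1)/ν ) · ∑_{j≥0} x_j²; in particular the weighted shift x ↦ ( N_ex·sin²(φ√(j+1))·(μ_{j+1}/λ_j)·x_{j+1} )_{j≥0} is a bounded operator on ℓ²(ℕ, ℝ) of norm at most N_ex·√((ν+1)/ν). -/

import Mathlib

noncomputable section

abbrev HR : Type := lp (fun _ : ℕ => ℝ) 2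

/-- Birth rates `λ_k² = N_ex·sin²(φ√(k+1)) + ν·(k+1)`. -/
noncomputable def lam2 (Nex ν φ : ℝ) (k : ℕ) : ℝ :=
  Nex * Real.sin (φ * Real.sqrt (k + 1)) ^ 2 + ν * (k + 1)

/-- Death rates `μ_k² = (ν+1)·k` (so `μ_0 = 0`). -/
noncomputable def mu2 (ν : ℝ) (k : ℕ) : ℝ := (ν + 1) * k

/-- The nonnegative square root `λ_k` of the birth rate. -/
noncomputable def lam (Nex ν φ : ℝ) (k : ℕ) : ℝ := Real.sqrt (lam2 Nex ν φ k)

/-- The nonnegative square root `μ_k` of the death rate. -/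
noncomputable def mu (ν : ℝ) (k : ℕ) : ℝ := Real.sqrt (mu2 ν k)

/-- The coefficient of the weighted shift appearing in the deformation `δ_s`
(without the scalar factor `eˢ − 1`): `j ↦ N_ex·sin²(φ√(j+1))·(μ_{j+1}/λ_j)`. -/
noncomputable def defCoeff (Nex ν φ : ℝ) (j : ℕ) : ℝ :=
  Nex * Real.sin (φ * Real.sqrt (j + 1)) ^ 2 * (mu ν (j + 1) / lam Nex ν φ j)

section Aux

lemma lam2_pos {Nex ν φ : ℝ} (hNex : 0 < Nex) (hν : 0 < ν) (j : ℕ) :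
    0 < lam2 Nex ν φ j := by
  have h1 : (0:ℝ) < ν * (j + 1) := by positivity
  have h2 : (0:ℝ) ≤ Nex * Real.sin (φ * Real.sqrt (j + 1)) ^ 2 := by positivity
  unfold lam2; linarith

lemma defCoeff_sq_le {Nex ν φ : ℝ} (hNex : 0 < Nex) (hν : 0 < ν) (j : ℕ) :
    (defCoeff Nex ν φ j) ^ 2 ≤ Nex ^ 2 * (ν + 1) / ν := by
  set s := Real.sin (φ * Real.sqrt (j + 1)) ^ 2 with hs
  have hs0 : 0 ≤ s := sq_nonneg _
  have hs1 : s ≤ 1 := Real.sin_sq_le_one _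
  have hl2 : 0 < lam2 Nex ν φ j := lam2_pos hNex hν j
  have hmusq : (mu ν (j+1)) ^ 2 = (ν + 1) * ((j:ℝ) + 1) := by
    rw [mu, Real.sq_sqrt (by unfold mu2; positivity)]
    unfold mu2; push_cast; ring
  have hlamsq : (lam Nex ν φ j) ^ 2 = lam2 Nex ν φ j := Real.sq_sqrt hl2.le
  have hexp : (defCoeff Nex ν φ j) ^ 2
      = Nex ^ 2 * s ^ 2 * ((ν + 1) * ((j:ℝ) + 1) / lam2 Nex ν φ j) := by
    unfold defCoeff
    rw [← hs, mul_pow, mul_pow, div_pow, hmusq, hlamsq]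
  rw [hexp]
  have hj1 : (0:ℝ) < (j:ℝ) + 1 := by positivity
  have hfrac : (ν + 1) * ((j:ℝ) + 1) / lam2 Nex ν φ j ≤ (ν + 1) / ν := by
    rw [div_le_div_iff₀ hl2 hν]
    have : ν * ((j:ℝ) + 1) ≤ lam2 Nex ν φ j := by
      unfold lam2; rw [← hs]; nlinarith
    nlinarith
  have hsq1 : s ^ 2 ≤ 1 := by nlinarith
  have h1 : Nex ^ 2 * s ^ 2 * ((ν + 1) * ((j:ℝ) + 1) / lam2 Nex ν φ j)
      ≤ Nex ^ 2 * 1 * ((ν + 1) / ν) := by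
    have hfr0 : 0 ≤ (ν + 1) * ((j:ℝ) + 1) / lam2 Nex ν φ j := by positivity
    apply mul_le_mul
    · nlinarith
    · exact hfrac
    · exact hfr0
    · positivity
  calc Nex ^ 2 * s ^ 2 * ((ν + 1) * ((j:ℝ) + 1) / lam2 Nex ν φ j)
      ≤ Nex ^ 2 * 1 * ((ν + 1) / ν) := h1
    _ = Nex ^ 2 * (ν + 1) / ν := by ring

end Aux

/-- The deformation of the restricted generator is a bounded perturbation:
if `ν > 0` (so `λ_j > 0` for all `j`), then for every `x ∈ ℓ²(ℕ, ℝ)`,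
`∑_j (N_ex·sin²(φ√(j+1))·(μ_{j+1}/λ_j)·x_{j+1})² ≤ (N_ex²(ν+1)/ν)·∑_j x_j²`;
in particular the weighted shift `x ↦ (N_ex·sin²(φ√(j+1))·(μ_{j+1}/λ_j)·x_{j+1})_j` is a
bounded operator on `ℓ²(ℕ, ℝ)` of norm at most `N_ex·√((ν+1)/ν)`. -/
theorem deformation_bounded (Nex ν φ : ℝ) (hNex : 0 < Nex) (hν : 0 < ν) :
    (∀ x : HR,
      Summable (fun j : ℕ => (defCoeff Nex ν φ j * (x : ∀ _ : ℕ, ℝ) (j + 1)) ^ 2) ∧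
      ∑' j : ℕ, (defCoeff Nex ν φ j * (x : ∀ _ : ℕ, ℝ) (j + 1)) ^ 2 ≤
        Nex ^ 2 * (ν + 1) / ν * ∑' j : ℕ, ((x : ∀ _ : ℕ, ℝ) j) ^ 2) ∧
    ∃ T : HR →L[ℝ] HR,
      (∀ (x : HR) (j : ℕ), (T x : ∀ _ : ℕ, ℝ) j = defCoeff Nex ν φ j * (x : ∀ _ : ℕ, ℝ) (j + 1)) ∧
      ‖T‖ ≤ Nex * Real.sqrt ((ν + 1) / ν) := by
  have hC0 : 0 ≤ Nex ^ 2 * (ν + 1) / ν := by positivity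
  have hK0 : 0 ≤ Nex * Real.sqrt ((ν + 1) / ν) := by positivity
  have hKsq : (Nex * Real.sqrt ((ν + 1) / ν)) ^ 2 = Nex ^ 2 * (ν + 1) / ν := by
    rw [mul_pow, Real.sq_sqrt (by positivity : (0:ℝ) ≤ (ν + 1) / ν)]
    ring
  -- pointwise square bound and summability for every x
  have hxsum : ∀ x : HR, Summable (fun j : ℕ => ((x : ∀ _ : ℕ, ℝ) j) ^ 2) := by
    intro x
    have h := (lp.memℓp x).summable (p := 2) (by norm_num)
    simp only [ENNReal.toReal_ofNat, Real.rpow_two, Real.norm_eq_abs, sq_abs] at h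
    exact h
  have hxsum' : ∀ x : HR, Summable (fun j : ℕ => ((x : ∀ _ : ℕ, ℝ) (j + 1)) ^ 2) := by
    intro x
    exact (hxsum x).comp_injective (add_left_injective 1)
  have hptw : ∀ (x : HR) (j : ℕ),
      (defCoeff Nex ν φ j * (x : ∀ _ : ℕ, ℝ) (j + 1)) ^ 2 ≤
        Nex ^ 2 * (ν + 1) / ν * ((x : ∀ _ : ℕ, ℝ) (j + 1)) ^ 2 := by
    intro x j
    rw [mul_pow]
    exact mul_le_mul_of_nonneg_right (defCoeff_sq_le hNex hν j) (sq_nonneg _)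
  have hsum : ∀ x : HR,
      Summable (fun j : ℕ => (defCoeff Nex ν φ j * (x : ∀ _ : ℕ, ℝ) (j + 1)) ^ 2) := by
    intro x
    exact Summable.of_nonneg_of_le (fun j => sq_nonneg _) (hptw x) ((hxsum' x).mul_left _)
  have hbound : ∀ x : HR,
      ∑' j : ℕ, (defCoeff Nex ν φ j * (x : ∀ _ : ℕ, ℝ) (j + 1)) ^ 2 ≤
        Nex ^ 2 * (ν + 1) / ν * ∑' j : ℕ, ((x : ∀ _ : ℕ, ℝ) j) ^ 2 := by
    intro x
    have h1 : ∑' j : ℕ, (defCoeff Nex ν φ j * (x : ∀ _ : ℕ, ℝ) (j + 1)) ^ 2 ≤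
        ∑' j : ℕ, Nex ^ 2 * (ν + 1) / ν * ((x : ∀ _ : ℕ, ℝ) (j + 1)) ^ 2 :=
      Summable.tsum_le_tsum (hptw x) (hsum x) ((hxsum' x).mul_left _)
    have h2 : ∑' j : ℕ, Nex ^ 2 * (ν + 1) / ν * ((x : ∀ _ : ℕ, ℝ) (j + 1)) ^ 2 =
        Nex ^ 2 * (ν + 1) / ν * ∑' j : ℕ, ((x : ∀ _ : ℕ, ℝ) (j + 1)) ^ 2 := tsum_mul_left
    have h3 : ∑' j : ℕ, ((x : ∀ _ : ℕ, ℝ) (j + 1)) ^ 2 ≤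
        ∑' j : ℕ, ((x : ∀ _ : ℕ, ℝ) j) ^ 2 :=
      Summable.tsum_le_tsum_of_inj (fun j => j + 1) (add_left_injective 1)
        (fun c _ => sq_nonneg _) (fun j => le_rfl) (hxsum' x) (hxsum x)
    calc ∑' j : ℕ, (defCoeff Nex ν φ j * (x : ∀ _ : ℕ, ℝ) (j + 1)) ^ 2
        ≤ Nex ^ 2 * (ν + 1) / ν * ∑' j : ℕ, ((x : ∀ _ : ℕ, ℝ) (j + 1)) ^ 2 := by
          rw [← h2]; exact h1
      _ ≤ Nex ^ 2 * (ν + 1) / ν * ∑' j : ℕ, ((x : ∀ _ : ℕ, ℝ) j) ^ 2 :=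
          mul_le_mul_of_nonneg_left h3 hC0
  refine ⟨fun x => ⟨hsum x, hbound x⟩, ?_⟩
  -- membership in ℓ²
  have hmem : ∀ x : HR, Memℓp (fun j : ℕ => defCoeff Nex ν φ j * (x : ∀ _ : ℕ, ℝ) (j + 1))
      (2 : ENNReal) := by
    intro x
    apply memℓp_gen
    simp only [ENNReal.toReal_ofNat, Real.rpow_two, Real.norm_eq_abs, sq_abs]
    exact hsum x
  -- the linear map
  set F : HR →ₗ[ℝ] HR :=
    { toFun := fun x => ⟨fun j => defCoeff Nex ν φ j * (x : ∀ _ : ℕ, ℝ) (j + 1), hmem x⟩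
      map_add' := by
        intro x y
        ext j
        simp [mul_add]; rfl
      map_smul' := by
        intro c x
        ext j
        simp [mul_comm, mul_left_comm] } with hF
  have hFapp : ∀ (x : HR) (j : ℕ),
      (F x : ∀ _ : ℕ, ℝ) j = defCoeff Nex ν φ j * (x : ∀ _ : ℕ, ℝ) (j + 1) := fun x j => rfl
  have hFle : ∀ x : HR, ‖F x‖ ≤ Nex * Real.sqrt ((ν + 1) / ν) * ‖x‖ := by
    intro x
    have hp : (0:ℝ) < (2 : ENNReal).toReal := by norm_num
    apply lp.norm_le_of_tsum_le hp (by positivity)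
    have hnorm2 : ∀ (y : HR), ∑' j : ℕ, ‖(y : ∀ _ : ℕ, ℝ) j‖ ^ (2 : ENNReal).toReal
        = ∑' j : ℕ, ((y : ∀ _ : ℕ, ℝ) j) ^ 2 := by
      intro y
      simp only [ENNReal.toReal_ofNat, Real.rpow_two, Real.norm_eq_abs, sq_abs]
    have hxnorm : ∑' j : ℕ, ((x : ∀ _ : ℕ, ℝ) j) ^ 2 = ‖x‖ ^ 2 := by
      have := lp.norm_rpow_eq_tsum hp x
      rw [hnorm2 x] at this
      rw [← this, ENNReal.toReal_ofNat, Real.rpow_two]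
    rw [hnorm2 (F x)]
    have : ∑' j : ℕ, ((F x : ∀ _ : ℕ, ℝ) j) ^ 2 ≤
        Nex ^ 2 * (ν + 1) / ν * ‖x‖ ^ 2 := by
      rw [← hxnorm]
      simpa [hFapp] using hbound x
    calc ∑' j : ℕ, ((F x : ∀ _ : ℕ, ℝ) j) ^ 2
        ≤ Nex ^ 2 * (ν + 1) / ν * ‖x‖ ^ 2 := this
      _ = (Nex * Real.sqrt ((ν + 1) / ν) * ‖x‖) ^ (2:ℕ) := by
          rw [mul_pow, hKsq]
      _ = (Nex * Real.sqrt ((ν + 1) / ν) * ‖x‖) ^ (2 : ENNReal).toReal := by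
          rw [ENNReal.toReal_ofNat, Real.rpow_two]
  refine ⟨F.mkContinuous (Nex * Real.sqrt ((ν + 1) / ν)) hFle, fun x j => rfl, ?_⟩
  exact F.mkContinuous_norm_le hK0 hFle
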